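/- Let E be a finite-dimensional real vector space with a nondegenerate symmetric bilinear form ⟨·,·⟩, let V₁, V₂ be subspaces with E = V₁ ⊕ V₂, set W₁ = V₁^⊥ and W₂ = V₂^⊥, and let θ = p_{W₁}^{W₂} ∘ p_{V₁}^{V₂} − p_{V₁}^{V₂} ∘ p_{W₁}^{W₂}. Let 𝔤 be a Lie subalgebra of End(E) such that every a ∈ 𝔤 preserves V₁ and V₂ and is skew-adjoint with respect to ⟨·,·⟩ (⟨a x, y⟩ + ⟨x, a y⟩ = 0 for all x, y), and suppose there exist finitely many formal curvature tensors R₁, …, R_m with R_i(x,y) ∈ 𝔤 for all i and all x, y ∈ E, such that 𝔤 is generated as a Lie algebra by the set {R_i(x,y) : 1 ≤ i ≤ m, x, y ∈ E} (𝔤 is a Berger algebra). Then for every a ∈ 𝔤 the image of a is contained in ker θ, and a vanishes on the image of θ (a ∘ θ = 0). -/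

import Mathlib

open Submodule

attribute [local instance 100] LieRing.ofAssociativeRing

/-- The projection onto `A` along a complement `B`, as an endomorphism of `E`. -/
noncomputable def projAlong {K E : Type*} [Field K] [AddCommGroup E] [Module K E]
    (A B : Submodule K E) (h : IsCompl A B) : E →ₗ[K] E :=
  A.subtype ∘ₗ A.linearProjOfIsCompl B h

section aux
variable {K E : Type*} [Field K] [AddCommGroup E] [Module K E]
variable {A C : Submodule K E} (h : IsCompl A C)

lemma projAlong_mem (x : E) : projAlong A C h x ∈ A := (A.linearProjOfIsCompl C h x).2

lemma projAlong_sub_mem (x : E) : x - projAlong A C h x ∈ C := by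
  have h1 := Submodule.projection_add_projection_eq_self h x
  have h2 : x - projAlong A C h x = (C.linearProjOfIsCompl A h.symm x : E) := by
    have : projAlong A C h x = (A.linearProjOfIsCompl C h x : E) := rfl
    rw [this]; exact sub_eq_of_eq_add' h1.symm
  rw [h2]; exact (C.linearProjOfIsCompl A h.symm x).2

lemma projAlong_left {x : E} (hx : x ∈ A) : projAlong A C h x = x := by
  exact congrArg (Subtype.val)
    (Submodule.projectionOnto_apply_left h ⟨x, hx⟩)

lemma projAlong_right {x : E} (hx : x ∈ C) : projAlong A C h x = 0 := by
  simp [projAlong]; exact Submodule.projectionOnto_apply_of_mem_right h hx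

lemma projAlong_comm (a : Module.End K E) (h1 : ∀ x ∈ A, a x ∈ A)
    (h2 : ∀ x ∈ C, a x ∈ C) (x : E) :
    projAlong A C h (a x) = a (projAlong A C h x) := by
  have hx : a x = a (projAlong A C h x) + (a x - a (projAlong A C h x)) := by abel
  have m1 : a (projAlong A C h x) ∈ A := h1 _ (projAlong_mem h x)
  have m2 : a x - a (projAlong A C h x) ∈ C := by
    rw [← map_sub]; exact h2 _ (projAlong_sub_mem h x)
  rw [hx, map_add, projAlong_left h m1, projAlong_right h m2, add_zero]

end aux

/-- If `𝔤` is a Berger algebra (generated as a Lie algebra by the values of finitely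
many formal curvature tensors matching `𝔤`), preserves the two complementary spaces
`V₁, V₂` and a nondegenerate symmetric bilinear form, then with
`θ = p_{W₁}^{W₂} ∘ p_{V₁}^{V₂} − p_{V₁}^{V₂} ∘ p_{W₁}^{W₂}` (where `Wᵢ = Vᵢ^⊥`),
every `a ∈ 𝔤` satisfies `im a ⊆ ker θ` and `a ∘ θ = 0`. -/
theorem stmt19 {E : Type*} [AddCommGroup E] [Module ℝ E] [FiniteDimensional ℝ E]
    (B : LinearMap.BilinForm ℝ E) (hBnd : B.Nondegenerate) (hBsymm : B.IsSymm)
    (V₁ V₂ : Submodule ℝ E) (hV : IsCompl V₁ V₂)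
    (hW : IsCompl (B.orthogonal V₁) (B.orthogonal V₂))
    (θ : Module.End ℝ E)
    (hθ : θ = projAlong (B.orthogonal V₁) (B.orthogonal V₂) hW ∘ₗ projAlong V₁ V₂ hV -
      projAlong V₁ V₂ hV ∘ₗ projAlong (B.orthogonal V₁) (B.orthogonal V₂) hW)
    (𝔤 : LieSubalgebra ℝ (Module.End ℝ E))
    (hinv₁ : ∀ a ∈ 𝔤, ∀ x ∈ V₁, a x ∈ V₁) (hinv₂ : ∀ a ∈ 𝔤, ∀ x ∈ V₂, a x ∈ V₂)
    (hgB : ∀ a ∈ 𝔤, ∀ x y : E, B (a x) y + B x (a y) = 0)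
    (m : ℕ) (R : Fin m → E →ₗ[ℝ] E →ₗ[ℝ] Module.End ℝ E)
    (hanti : ∀ (i : Fin m) (x y : E), R i x y = - R i y x)
    (hbianchi : ∀ (i : Fin m) (x y z : E), R i x y z + R i y z x + R i z x y = 0)
    (hmatch : ∀ (i : Fin m) (x y : E), R i x y ∈ 𝔤)
    (hgen : 𝔤 = LieSubalgebra.lieSpan ℝ (Module.End ℝ E)
      {a | ∃ (i : Fin m) (x y : E), R i x y = a}) :
    ∀ a ∈ 𝔤, LinearMap.range a ≤ LinearMap.ker θ ∧ a ∘ₗ θ = 0 := by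
  set P : Module.End ℝ E := projAlong V₁ V₂ hV with hPdef
  set Q : Module.End ℝ E := projAlong (B.orthogonal V₁) (B.orthogonal V₂) hW with hQdef
  have hsymm : ∀ x y : E, B x y = B y x := fun x y => by simpa using hBsymm.eq x y
  have hPmem : ∀ x : E, P x ∈ V₁ := fun x => projAlong_mem hV x
  have hPsub : ∀ x : E, x - P x ∈ V₂ := fun x => projAlong_sub_mem hV x
  have hQmem : ∀ x : E, Q x ∈ B.orthogonal V₁ := fun x => projAlong_mem hW x
  have hQsub : ∀ x : E, x - Q x ∈ B.orthogonal V₂ := fun x => projAlong_sub_mem hW x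
  have hBV1W1 : ∀ v ∈ V₁, ∀ w ∈ B.orthogonal V₁, B v w = 0 := fun v hv w hw => hw v hv
  have hBV2W2 : ∀ v ∈ V₂, ∀ w ∈ B.orthogonal V₂, B v w = 0 := fun v hv w hw => hw v hv
  -- adjoint identities
  have hadjP : ∀ x y : E, B (P x) y = B x y - B x (Q y) := by
    intro x y
    have h1 : B (P x) (Q y) = 0 := hBV1W1 _ (hPmem x) _ (hQmem y)
    have h2 : B (x - P x) (y - Q y) = 0 := hBV2W2 _ (hPsub x) _ (hQsub y)
    simp only [map_sub, LinearMap.sub_apply] at h2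
    linarith
  have hadjQ : ∀ x y : E, B (Q x) y = B x y - B x (P y) := by
    intro x y
    have h1 : B (Q x) (P y) = 0 := by
      rw [hsymm]; exact hBV1W1 _ (hPmem y) _ (hQmem x)
    have h2 : B (x - Q x) (y - P y) = 0 := by
      rw [hsymm]; exact hBV2W2 _ (hPsub y) _ (hQsub x)
    simp only [map_sub, LinearMap.sub_apply] at h2
    linarith
  have hθapp : ∀ x : E, θ x = Q (P x) - P (Q x) := by
    intro x; rw [hθ]; rfl
  -- θ is self-adjoint
  have hθadj : ∀ x y : E, B (θ x) y = B x (θ y) := by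
    intro x y
    have e1 : B (θ x) y = B (Q (P x)) y - B (P (Q x)) y := by
      rw [hθapp]; simp [map_sub, LinearMap.sub_apply]
    have e2 : B x (θ y) = B x (Q (P y)) - B x (P (Q y)) := by
      rw [hθapp]; simp [map_sub]
    have a1 := hadjQ (P x) y
    have a2 := hadjP (Q x) y
    have a3 := hadjP x y
    have a4 := hadjP x (P y)
    have a5 := hadjQ x y
    have a6 := hadjQ x (Q y)
    -- B (Q (P x)) y = B (Px) y - B (Px) (Py); B (Px) (Py) = B x (Py) - B x (Q (P y))
    have a7 := hadjP x (Q y)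
    have a8 := hadjP (P x) (P y)
    -- recompute directly:
    have b1 : B (Q (P x)) y = B (P x) y - B (P x) (P y) := hadjQ (P x) y
    have b2 : B (P (Q x)) y = B (Q x) y - B (Q x) (Q y) := hadjP (Q x) y
    have b3 : B (P x) y = B x y - B x (Q y) := hadjP x y
    have b4 : B (P x) (P y) = B x (P y) - B x (Q (P y)) := hadjP x (P y)
    have b5 : B (Q x) y = B x y - B x (P y) := hadjQ x y
    have b6 : B (Q x) (Q y) = B x (Q y) - B x (P (Q y)) := hadjQ x (Q y)
    linarith
  -- θ swaps V₁ and V₂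
  have hθV₁ : ∀ v ∈ V₁, θ v ∈ V₂ := by
    intro v hv
    have : θ v = Q v - P (Q v) := by rw [hθapp, projAlong_left hV hv]
    rw [this]; exact hPsub (Q v)
  have hθV₂ : ∀ v ∈ V₂, θ v ∈ V₁ := by
    intro v hv
    have : θ v = -(P (Q v)) := by
      rw [hθapp, projAlong_right hV hv, map_zero, zero_sub]
    rw [this]; exact neg_mem (hPmem (Q v))
  -- members of 𝔤 preserve the orthogonal complements
  have hinvW₁ : ∀ a ∈ 𝔤, ∀ w ∈ B.orthogonal V₁, a w ∈ B.orthogonal V₁ := by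
    intro a ha w hw n hn
    have h1 := hgB a ha n w
    have h2 : B (a n) w = 0 := hw _ (hinv₁ a ha n hn)
    show B n (a w) = 0
    linarith
  have hinvW₂ : ∀ a ∈ 𝔤, ∀ w ∈ B.orthogonal V₂, a w ∈ B.orthogonal V₂ := by
    intro a ha w hw n hn
    have h1 := hgB a ha n w
    have h2 : B (a n) w = 0 := hw _ (hinv₂ a ha n hn)
    show B n (a w) = 0
    linarith
  -- members of 𝔤 commute with θ
  have hcomm : ∀ a ∈ 𝔤, ∀ x : E, a (θ x) = θ (a x) := by
    intro a ha x
    have cP : ∀ z : E, P (a z) = a (P z) :=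
      projAlong_comm hV a (hinv₁ a ha) (hinv₂ a ha)
    have cQ : ∀ z : E, Q (a z) = a (Q z) :=
      projAlong_comm hW a (hinvW₁ a ha) (hinvW₂ a ha)
    rw [hθapp, hθapp, map_sub, cQ, cP, cP, cQ]
  -- curvature pairing symmetries
  have hS1 : ∀ (i : Fin m) (x y z w : E), B (R i x y z) w = - B (R i y x z) w := by
    intro i x y z w
    rw [hanti i x y]
    simp
  have hS2 : ∀ (i : Fin m) (x y z w : E), B (R i x y z) w = - B (R i x y w) z := by
    intro i x y z w
    have h1 := hgB _ (hmatch i x y) z w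
    have h2 := hsymm z (R i x y w)
    linarith
  have hS3 : ∀ (i : Fin m) (x y z w : E),
      B (R i x y z) w + B (R i y z x) w + B (R i z x y) w = 0 := by
    intro i x y z w
    have h := congrArg (fun u => B u w) (hbianchi i x y z)
    simpa [map_add, LinearMap.add_apply] using h
  have hS4 : ∀ (i : Fin m) (x y z w : E), B (R i x y z) w = B (R i z w x) y := by
    intro i x y z w
    have b1 := hS3 i x y z w
    have b2 := hS3 i y z w x
    have b3 := hS3 i z w x y
    have b4 := hS3 i w x y z
    have c1 := hS2 i x y z w
    have c2 := hS2 i y z x w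
    have c3 := hS2 i z w y x
    have c4 := hS2 i w x z y
    have d1 := hS1 i x z w y
    have d2 := hS2 i z x w y
    have d3 := hS1 i y w x z
    have d4 := hS2 i w y x z
    linarith
  -- moving θ between arguments
  have hm0 : ∀ (i : Fin m) (x y z w : E),
      B (R i x y (θ z)) w = - B (R i x y (θ w)) z := by
    intro i x y z w
    have e1 : B (R i x y (θ z)) w = B (θ (R i x y z)) w := by
      rw [hcomm _ (hmatch i x y) z]
    have e2 : B (θ (R i x y z)) w = B (R i x y z) (θ w) := hθadj _ _
    have e3 := hgB _ (hmatch i x y) z (θ w)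
    have e4 := hsymm z (R i x y (θ w))
    linarith
  have hm1 : ∀ (i : Fin m) (x y z w : E),
      B (R i (θ x) y z) w = B (R i x (θ y) z) w := by
    intro i x y z w
    have e1 : B (R i (θ x) y z) w = B (R i z w (θ x)) y := hS4 i (θ x) y z w
    have e2 := hm0 i z w x y
    have e3 : B (R i z w (θ y)) x = B (R i (θ y) x z) w := (hS4 i (θ y) x z w).symm
    have e4 := hS1 i x (θ y) z w
    linarith
  -- the two Bianchi consequences, with G a b c d := B (R i (θ a) b c) d
  have hH : ∀ (i : Fin m) (x y z w : E),
      B (R i (θ x) y z) w + B (R i (θ x) w y) z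
        - B (R i (θ z) w x) y - B (R i (θ y) z x) w = 0 := by
    intro i x y z w
    -- E2 : Bianchi at (θ x, y, z), paired with w
    have E2 := hS3 i (θ x) y z w
    have c1 : B (R i y z (θ x)) w = B (R i (θ x) w y) z := by
      rw [hS4 i y z (θ x) w]
    have c2 : B (R i z (θ x) y) w = B (R i (θ z) x y) w := by
      rw [← hm1 i z x y w]
    -- E4 : Bianchi at (x, y, θ z), paired with w
    have E4 := hS3 i x y (θ z) w
    have c3 : B (R i x y (θ z)) w = B (R i (θ z) w x) y := by
      rw [hS4 i x y (θ z) w]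
    have c4 : B (R i y (θ z) x) w = B (R i (θ y) z x) w := by
      rw [← hm1 i y z x w]
    have c5 : B (R i (θ z) x y) w = B (R i (θ z) x y) w := rfl
    linarith
  have hGpair : ∀ (i : Fin m) (x y z w : E),
      B (R i (θ x) y z) w = B (R i (θ z) w x) y := by
    intro i x y z w
    have h1 := hH i x y z w
    have h2 := hH i x w y z
    have h3 := hH i x z w y
    linarith
  -- the key operator identity : R i x y ∘ θ moves θ to the first argument
  have hstar : ∀ (i : Fin m) (x y z : E), R i x y (θ z) = R i (θ x) y z := by
    intro i x y z
    have key : ∀ w : E, B (R i x y (θ z)) w = B (R i (θ x) y z) w := by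
      intro w
      have e1 : B (R i x y (θ z)) w = B (R i (θ z) w x) y := hS4 i x y (θ z) w
      have e2 : B (R i (θ x) y z) w = B (R i (θ z) w x) y := hGpair i x y z w
      linarith
    have hz : ∀ w : E, B (R i x y (θ z) - R i (θ x) y z) w = 0 := by
      intro w
      simp only [map_sub, LinearMap.sub_apply]
      have := key w
      linarith
    have := hBnd.1 _ hz
    exact sub_eq_zero.mp this
  -- curvature values annihilate the image of θ
  have hRθ : ∀ (i : Fin m) (x y z : E), R i x y (θ z) = 0 := by
    intro i x y z
    have main : ∀ v : E, v ∈ V₁ ∨ v ∈ V₂ → R i x y (θ v) = 0 := by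
      rintro v (hv | hv)
      · have m1 : R i x y (θ v) ∈ V₂ := hinv₂ _ (hmatch i x y) _ (hθV₁ v hv)
        have m2 : R i x y (θ v) ∈ V₁ := by
          rw [hstar i x y v]; exact hinv₁ _ (hmatch i (θ x) y) _ hv
        exact (Submodule.disjoint_def.mp hV.disjoint) _ m2 m1
      · have m1 : R i x y (θ v) ∈ V₁ := hinv₁ _ (hmatch i x y) _ (hθV₂ v hv)
        have m2 : R i x y (θ v) ∈ V₂ := by
          rw [hstar i x y v]; exact hinv₂ _ (hmatch i (θ x) y) _ hv
        exact (Submodule.disjoint_def.mp hV.disjoint) _ m1 m2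
    have hz : θ z = θ (P z) + θ (z - P z) := by
      rw [← map_add]; congr 1; abel
    calc R i x y (θ z) = R i x y (θ (P z)) + R i x y (θ (z - P z)) := by
          rw [hz, map_add]
      _ = 0 := by
          rw [main _ (Or.inl (hPmem z)), main _ (Or.inr (hPsub z)), add_zero]
  have hθR : ∀ (i : Fin m) (x y z : E), θ (R i x y z) = 0 := by
    intro i x y z
    rw [← hcomm _ (hmatch i x y) z, hRθ i x y z]
  -- the Lie subalgebra of endomorphisms annihilating θ on both sides
  let K : LieSubalgebra ℝ (Module.End ℝ E) :=
    { carrier := {a : Module.End ℝ E | (∀ z, θ (a z) = 0) ∧ (∀ z, a (θ z) = 0)}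
      add_mem' := by
        rintro a b ⟨ha1, ha2⟩ ⟨hb1, hb2⟩
        refine ⟨fun z => ?_, fun z => ?_⟩
        · simp [LinearMap.add_apply, map_add, ha1 z, hb1 z]
        · simp [LinearMap.add_apply, ha2 z, hb2 z]
      zero_mem' := by
        refine ⟨fun z => ?_, fun z => ?_⟩ <;> simp
      smul_mem' := by
        rintro c a ⟨ha1, ha2⟩
        refine ⟨fun z => ?_, fun z => ?_⟩
        · simp [LinearMap.smul_apply, map_smul, ha1 z]
        · simp [LinearMap.smul_apply, ha2 z]
      lie_mem' := by
        rintro a b ⟨ha1, ha2⟩ ⟨hb1, hb2⟩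
        refine ⟨fun z => ?_, fun z => ?_⟩
        · rw [Ring.lie_def]
          simp only [LinearMap.sub_apply, Module.End.mul_apply, map_sub]
          rw [ha1 (b z), hb1 (a z), sub_zero]
        · rw [Ring.lie_def]
          simp only [LinearMap.sub_apply, Module.End.mul_apply]
          rw [hb2 z, ha2 z, map_zero, map_zero, sub_zero] }
  have hKmem : ∀ (i : Fin m) (x y : E), R i x y ∈ K :=
    fun i x y => ⟨fun z => hθR i x y z, fun z => hRθ i x y z⟩
  have h𝔤K : 𝔤 ≤ K := by
    rw [hgen]
    apply LieSubalgebra.lieSpan_le.mpr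
    rintro a ⟨i, x, y, rfl⟩
    exact hKmem i x y
  intro a ha
  obtain ⟨h1, h2⟩ := h𝔤K ha
  constructor
  · rintro u ⟨v, rfl⟩
    exact LinearMap.mem_ker.mpr (h1 v)
  · exact LinearMap.ext fun z => h2 z
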